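/- Let i be a nonnegative integer and let G be a group (Δ(G)+i)-edge-critical graph. Then for every edge uv ∈ E(G), the degree sum satisfies d_G(u) + d_G(v) ≥ Δ(G) + i + 2. -/

import Mathlib

open SimpleGraph

/-- `G` is `A`-colorable for the Abelian group `A`: for every "oriented weight" `f` on the
edges (encoded as an antisymmetric function on ordered pairs, which is equivalent to fixing an
orientation `D` of `E(G)` and a function `E(G) → A`), there is an `(A,f)`-coloring, i.e. a
vertex coloring `c : V → A` with `c u - c v ≠ f u v` for every edge oriented from `u` to `v`. -/
def IsGroupColorable {V : Type*} (G : SimpleGraph V) (A : Type) [AddCommGroup A] : Prop :=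
  ∀ f : V → V → A, (∀ u v, f v u = - f u v) →
    ∃ c : V → A, ∀ u v, G.Adj u v → c u - c v ≠ f u v

/-- The group chromatic number `χ_g(G)`: the least `m` such that `G` is `A`-colorable for
every Abelian group `A` of order at least `m`. -/
noncomputable def groupChromaticNumber {V : Type*} (G : SimpleGraph V) : ℕ :=
  sInf {m : ℕ | ∀ (A : Type) [AddCommGroup A] [Fintype A],
    m ≤ Fintype.card A → IsGroupColorable G A}

/-- `G` is group `k`-choosable: for every Abelian group `A` of order at least `k`, every
`k`-uniform list assignment `L`, and every antisymmetric edge weight `f` (i.e. an orientation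
together with a function `E(G) → A`), there is an `(A,L,f)`-coloring. -/
def IsGroupChoosable {V : Type*} (G : SimpleGraph V) (k : ℕ) : Prop :=
  ∀ (A : Type) [AddCommGroup A] [Fintype A], k ≤ Fintype.card A →
    ∀ L : V → Finset A, (∀ v, (L v).card = k) →
      ∀ f : V → V → A, (∀ u v, f v u = - f u v) →
        ∃ c : V → A, (∀ v, c v ∈ L v) ∧ ∀ u v, G.Adj u v → c u - c v ≠ f u v

/-- The group choice number `χ_gl(G)`: the least `k` such that `G` is group `k`-choosable. -/
noncomputable def groupChoiceNumber {V : Type*} (G : SimpleGraph V) : ℕ :=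
  sInf {k : ℕ | IsGroupChoosable G k}

/-- `G` is group `k`-edge-choosable iff its line graph is group `k`-choosable. -/
def IsGroupEdgeChoosable {V : Type*} (G : SimpleGraph V) (k : ℕ) : Prop :=
  IsGroupChoosable G.lineGraph k

/-- The group edge chromatic number `χ'_g(G) = χ_g(𝓛(G))`. -/
noncomputable def groupEdgeChromaticNumber {V : Type*} (G : SimpleGraph V) : ℕ :=
  groupChromaticNumber G.lineGraph

/-- The group edge choice number `χ'_gl(G) = χ_gl(𝓛(G))`. -/
noncomputable def groupEdgeChoiceNumber {V : Type*} (G : SimpleGraph V) : ℕ :=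
  groupChoiceNumber G.lineGraph

/-- `G` is a cycle (of some length `n ≥ 3`). -/
def IsCycleGraph {V : Type*} (G : SimpleGraph V) : Prop :=
  ∃ n : ℕ, 3 ≤ n ∧ Nonempty (G ≃g cycleGraph n)

/-- The maximum degree of a subgraph `H` of `G` (the degree of `v` in `H` is the
cardinality of its neighbor set in `H`). -/
noncomputable def subgraphMaxDegree {V : Type*} {G : SimpleGraph V} (H : G.Subgraph) : ℕ :=
  ⨆ v, (H.neighborSet v).ncard

/-- `G` is group `(Δ(G)+i)`-edge-critical: `χ'_gl(G) > Δ(G) + i`, but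
`χ'_gl(H) ≤ Δ(H) + i` for every proper subgraph `H ⊂ G`. -/
def IsGroupEdgeCritical {V : Type*} [Fintype V] (G : SimpleGraph V) [DecidableRel G.Adj]
    (i : ℕ) : Prop :=
  G.maxDegree + i < groupEdgeChoiceNumber G ∧
    ∀ H : G.Subgraph, H ≠ ⊤ → groupEdgeChoiceNumber H.coe ≤ subgraphMaxDegree H + i

lemma groupChoosable_mono {V : Type*} {G : SimpleGraph V} {k k' : ℕ}
    (h : IsGroupChoosable G k) (hk : k ≤ k') : IsGroupChoosable G k' := by
  classical
  intro A _ _ hA L hL f hf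
  have hsub : ∀ v, ∃ t ⊆ L v, t.card = k := fun v =>
    Finset.exists_subset_card_eq (s := L v) (n := k) (by rw [hL v]; exact hk)
  choose L' hL'sub hL'card using hsub
  obtain ⟨c, hc1, hc2⟩ := h A (le_trans hk hA) L' hL'card f hf
  exact ⟨c, fun v => hL'sub v (hc1 v), hc2⟩

lemma groupChoosable_of_embedding {V W : Type*} {G : SimpleGraph V} {G' : SimpleGraph W}
    (φ : G ↪g G') {k : ℕ} (h : IsGroupChoosable G' k) : IsGroupChoosable G k := by
  classical
  intro A _ _ hA L hL f hf
  obtain ⟨D, -, hD⟩ := Finset.exists_subset_card_eq (s := (Finset.univ : Finset A)) (n := k) (by simpa using hA)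
  set L' : W → Finset A := fun w => if hw : ∃ a, φ a = w then L hw.choose else D with hL'def
  set f' : W → W → A := fun w x =>
    if hw : ∃ a, φ a = w then if hx : ∃ b, φ b = x then f hw.choose hx.choose else 0 else 0
    with hf'def
  have hL' : ∀ w, (L' w).card = k := by
    intro w
    by_cases hw : ∃ a, φ a = w <;> simp [hL'def, hw, hL, hD]
  have hf' : ∀ w x, f' x w = - f' w x := by
    intro w x
    by_cases hw : ∃ a, φ a = w <;> by_cases hx : ∃ b, φ b = x <;>
      simp [hf'def, hw, hx, ← hf]
  obtain ⟨c', hc'1, hc'2⟩ := h A hA L' hL' f' hf'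
  refine ⟨fun a => c' (φ a), fun a => ?_, fun a b hab => ?_⟩
  · have hw : ∃ x, φ x = φ a := ⟨a, rfl⟩
    have hch : hw.choose = a := φ.injective hw.choose_spec
    have := hc'1 (φ a)
    rw [hL'def] at this
    simpa [dif_pos hw, hch] using this
  · have h2 := hc'2 (φ a) (φ b) (φ.map_adj_iff.2 hab)
    have hw : ∃ x, φ x = φ a := ⟨a, rfl⟩
    have hx : ∃ x, φ x = φ b := ⟨b, rfl⟩
    have ha : hw.choose = a := φ.injective hw.choose_spec
    have hb : hx.choose = b := φ.injective hx.choose_spec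
    rw [hf'def] at h2
    simpa [dif_pos hw, dif_pos hx, ha, hb] using h2

lemma aux_listcolor {V : Type*} [DecidableEq V] (G : SimpleGraph V)
    (A : Type) [AddCommGroup A] (L : V → Finset A) (f : V → V → A)
    (hf : ∀ u v, f v u = - f u v) (s : Finset V) :
    (∀ v, s.card ≤ (L v).card) →
    ∃ c : V → A, ∀ v ∈ s, c v ∈ L v ∧ ∀ w ∈ s, G.Adj w v → c w - c v ≠ f w v := by
  classical
  induction s using Finset.cons_induction with
  | empty => exact fun _ => ⟨fun _ => 0, fun v hv => absurd hv (Finset.notMem_empty v)⟩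
  | cons a s ha ih =>
    intro hL
    obtain ⟨c, hc⟩ := ih (fun v => le_trans (le_trans (Nat.le_succ _) (by rw [Finset.card_cons])) (hL v))
    set F : Finset A := s.image (fun w => c w - f w a) with hF
    have hcard : F.card < (L a).card := by
      calc F.card ≤ s.card := Finset.card_image_le
        _ < (Finset.cons a s ha).card := by rw [Finset.card_cons]; omega
        _ ≤ (L a).card := hL a
    have hns : ¬ (L a ⊆ F) := fun hsub => absurd (Finset.card_le_card hsub) (by omega)
    obtain ⟨z, hzL, hzF⟩ := Finset.not_subset.1 hns
    refine ⟨Function.update c a z, fun v hv => ?_⟩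
    rcases Finset.mem_cons.1 hv with hva | hv
    · refine ⟨by rw [hva, Function.update_self]; exact hzL, fun w hw hadj => ?_⟩
      rcases Finset.mem_cons.1 hw with hwa | hw
      · exact absurd hadj (by rw [hva, hwa]; exact G.irrefl)
      · have hwa : w ≠ a := fun h => ha (h ▸ hw)
        rw [hva, Function.update_self, Function.update_of_ne hwa]
        intro h
        refine hzF (Finset.mem_image.2 ⟨w, hw, ?_⟩)
        rw [← h]; abel
    · have hva : v ≠ a := fun h => ha (h ▸ hv)
      refine ⟨by rw [Function.update_of_ne hva]; exact (hc v hv).1, fun w hw hadj => ?_⟩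
      rcases Finset.mem_cons.1 hw with hwa | hw
      · rw [hwa, Function.update_self, Function.update_of_ne hva]
        intro h
        refine hzF (Finset.mem_image.2 ⟨v, hv, ?_⟩)
        rw [hf v a] at h
        rw [sub_eq_iff_eq_add] at h
        rw [h]; abel
      · have hwa : w ≠ a := fun h => ha (h ▸ hw)
        rw [Function.update_of_ne hva, Function.update_of_ne hwa]
        exact (hc v hv).2 w hw hadj

lemma groupChoosable_all {V : Type*} [Fintype V] (G : SimpleGraph V) :
    IsGroupChoosable G (Fintype.card V) := by
  classical
  intro A _ _ hA L hL f hf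
  obtain ⟨c, hc⟩ := aux_listcolor G A L f hf Finset.univ
    (fun v => by rw [hL v]; simp)
  exact ⟨c, fun v => (hc v (Finset.mem_univ v)).1,
    fun a b hab => (hc b (Finset.mem_univ b)).2 a (Finset.mem_univ a) hab⟩

lemma groupChoosable_extend {V : Type*} [Finite V] {G : SimpleGraph V} (v0 : V) {k : ℕ}
    (hdeg : (G.neighborSet v0).ncard < k)
    (h : IsGroupChoosable (G.induce {v | v ≠ v0}) k) :
    IsGroupChoosable G k := by
  classical
  intro A _ _ hA L hL f hf
  obtain ⟨c', hc'1, hc'2⟩ := h A hA (fun x => L x.val)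
    (fun x => hL x.val) (fun x y => f x.val y.val) (fun x y => hf x.val y.val)
  set cc : V → A := fun x => if hx : x = v0 then 0 else c' ⟨x, hx⟩ with hcc
  set F : Finset A :=
    ((G.neighborSet v0).toFinite.toFinset).image (fun w => cc w - f w v0) with hFdef
  have hFcard : F.card < k := by
    calc F.card ≤ (G.neighborSet v0).toFinite.toFinset.card := Finset.card_image_le
      _ = (G.neighborSet v0).ncard := (Set.ncard_eq_toFinset_card _ _).symm
      _ < k := hdeg
  have hns : ¬ (L v0 ⊆ F) := fun hsub =>
    absurd (Finset.card_le_card hsub) (by rw [hL v0]; omega)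
  obtain ⟨z, hzL, hzF⟩ := Finset.not_subset.1 hns
  refine ⟨fun x => if hx : x = v0 then z else c' ⟨x, hx⟩, fun x => ?_, fun x y hxy => ?_⟩
  · by_cases hx : x = v0
    · simp only [dif_pos hx]; rw [hx]; exact hzL
    · simp only [dif_neg hx]; exact hc'1 _
  · have hxy' : x ≠ y := G.ne_of_adj hxy
    by_cases hx : x = v0
    · have hy : y ≠ v0 := fun h => hxy' (hx.trans h.symm)
      simp only [dif_pos hx, dif_neg hy]
      intro hcon
      refine hzF (Finset.mem_image.2 ⟨y, ?_, ?_⟩)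
      · rw [Set.Finite.mem_toFinset]
        show G.Adj v0 y
        exact hx ▸ hxy
      · have hcy : cc y = c' ⟨y, hy⟩ := by rw [hcc]; exact dif_neg hy
        rw [hcy]
        rw [hx, hf y v0, sub_eq_iff_eq_add] at hcon
        rw [hcon]; abel
    · by_cases hy : y = v0
      · simp only [dif_neg hx, dif_pos hy]
        intro hcon
        refine hzF (Finset.mem_image.2 ⟨x, ?_, ?_⟩)
        · rw [Set.Finite.mem_toFinset]
          show G.Adj v0 x
          exact hy ▸ hxy.symm
        · have hcx : cc x = c' ⟨x, hx⟩ := by rw [hcc]; exact dif_neg hx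
          rw [sub_eq_iff_eq_add, hy] at hcon
          rw [hcx, hcon]; abel
      · simp only [dif_neg hx, dif_neg hy]
        exact hc'2 ⟨x, hx⟩ ⟨y, hy⟩ hxy

noncomputable def lineGraphRestrictEmbedding {V : Type*} (G : SimpleGraph V) (H : G.Subgraph)
    (hverts : H.verts = Set.univ) (e0 : G.edgeSet)
    (hH : ∀ a b : V, H.Adj a b ↔ G.Adj a b ∧ s(a, b) ≠ (e0 : Sym2 V)) :
    ((G.lineGraph).induce {e : G.edgeSet | e ≠ e0}) ↪g H.coe.lineGraph := by
  classical
  set toH : V → ↥H.verts := fun x => ⟨x, by rw [hverts]; exact Set.mem_univ x⟩ with htoH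
  have htoHval : ∀ x, (toH x : V) = x := fun x => rfl
  have htoHinj : Function.Injective toH := fun x y h => by
    have := congrArg (Subtype.val) h; simpa using this
  have key0 : ∀ q : Sym2 V, Sym2.map (Subtype.val) (Sym2.map toH q) = q := by
    intro q
    rw [Sym2.map_map]
    have : (Subtype.val ∘ toH) = id := rfl
    rw [this, Sym2.map_id, id_eq]
  have hmem : ∀ q : Sym2 V, q ∈ G.edgeSet → q ≠ (e0 : Sym2 V) →
      Sym2.map toH q ∈ H.coe.edgeSet := by
    intro q
    induction q using Sym2.ind with
    | _ a b =>
      intro hq hne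
      rw [Sym2.map_pair_eq]
      exact (H.coe).mem_edgeSet.2 ((hH a b).2 ⟨G.mem_edgeSet.1 hq, hne⟩)
  set ψ : ↥{e : G.edgeSet | e ≠ e0} → ↥(H.coe.edgeSet) :=
    fun ee => ⟨Sym2.map toH (ee.val : Sym2 V), hmem _ (ee.val.property)
      (fun h => ee.property (Subtype.ext h))⟩ with hψ
  have hψinj : Function.Injective ψ := by
    intro a b h
    have h1 : Sym2.map toH (a.val : Sym2 V) = Sym2.map toH (b.val : Sym2 V) :=
      congrArg Subtype.val h
    have h2 : (a.val : Sym2 V) = (b.val : Sym2 V) := by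
      rw [← key0 (a.val : Sym2 V), ← key0 (b.val : Sym2 V), h1]
    exact Subtype.ext (Subtype.ext h2)
  have hmemiff : ∀ (q1 q2 : Sym2 V),
      ((∃ w : ↥H.verts, w ∈ Sym2.map toH q1 ∧ w ∈ Sym2.map toH q2) ↔
        ∃ x : V, x ∈ q1 ∧ x ∈ q2) := by
    intro q1 q2
    constructor
    · rintro ⟨w, hw1, hw2⟩
      obtain ⟨x, hx, hxw⟩ := Sym2.mem_map.1 hw1
      obtain ⟨y, hy, hyw⟩ := Sym2.mem_map.1 hw2
      have : x = y := htoHinj (hxw.trans hyw.symm)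
      exact ⟨x, hx, this ▸ hy⟩
    · rintro ⟨x, hx1, hx2⟩
      exact ⟨toH x, Sym2.mem_map.2 ⟨x, hx1, rfl⟩, Sym2.mem_map.2 ⟨x, hx2, rfl⟩⟩
  refine ⟨⟨ψ, hψinj⟩, ?_⟩
  intro a b
  rw [lineGraph_adj_iff_exists]
  show _ ↔ (G.lineGraph).Adj a.val b.val
  rw [lineGraph_adj_iff_exists]
  constructor
  · rintro ⟨hne, hex⟩
    refine ⟨fun h => hne (congrArg ψ (Subtype.ext h)), ?_⟩
    exact (hmemiff _ _).1 hex
  · rintro ⟨hne, hex⟩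
    refine ⟨fun h => hne ?_, (hmemiff _ _).2 hex⟩
    exact congrArg Subtype.val (hψinj h)

/-- If `G` is group `(Δ(G)+i)`-edge-critical, then for every edge `uv ∈ E(G)` one has
`d_G(u) + d_G(v) ≥ Δ(G) + i + 2`. -/
theorem degree_sum_of_isGroupEdgeCritical {V : Type*} [Fintype V]
    (G : SimpleGraph V) [DecidableRel G.Adj] (i : ℕ) (hG : IsGroupEdgeCritical G i)
    (u v : V) (huv : G.Adj u v) :
    G.maxDegree + i + 2 ≤ G.degree u + G.degree v := by
  classical
  by_contra hcon
  push_neg at hcon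
  set k := G.maxDegree + i with hk
  set e0 : G.edgeSet := ⟨s(u, v), huv⟩ with he0
  let H : G.Subgraph :=
    { verts := Set.univ
      Adj := fun a b => G.Adj a b ∧ s(a, b) ≠ s(u, v)
      adj_sub := fun h => h.1
      edge_vert := fun _ => Set.mem_univ _
      symm := ⟨fun a b h => ⟨h.1.symm, by rw [Sym2.eq_swap]; exact h.2⟩⟩ }
  have hHne : H ≠ ⊤ := by
    intro h
    have hadj : H.Adj u v := by rw [h]; simpa using huv
    exact hadj.2 rfl
  have hmax : subgraphMaxDegree H ≤ G.maxDegree := by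
    have : Nonempty V := ⟨u⟩
    refine ciSup_le fun x => ?_
    have h1 : H.neighborSet x ⊆ G.neighborSet x := fun y hy => hy.1
    have h2 : (H.neighborSet x).ncard ≤ (G.neighborSet x).ncard :=
      Set.ncard_le_ncard h1 (Set.toFinite _)
    have h3 : (G.neighborSet x).ncard = G.degree x := by
      rw [← Nat.card_coe_set_eq, Nat.card_eq_fintype_card,
        G.card_neighborSet_eq_degree]
    exact le_trans h2 (h3 ▸ G.degree_le_maxDegree x)
  have hcrit := hG.2 H hHne
  haveI : Fintype ↥(H.coe.edgeSet) := Fintype.ofFinite _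
  have hmem : IsGroupChoosable H.coe.lineGraph k := by
    have hnonempty : {m | IsGroupChoosable H.coe.lineGraph m}.Nonempty :=
      ⟨_, groupChoosable_all _⟩
    have hinf : IsGroupChoosable H.coe.lineGraph
        (sInf {m | IsGroupChoosable H.coe.lineGraph m}) := Nat.sInf_mem hnonempty
    refine groupChoosable_mono hinf (le_trans ?_ (by omega : subgraphMaxDegree H + i ≤ k))
    exact hcrit
  have hemb := lineGraphRestrictEmbedding G H rfl e0 (fun a b => Iff.rfl)
  have h1 : IsGroupChoosable ((G.lineGraph).induce {e : G.edgeSet | e ≠ e0}) k :=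
    groupChoosable_of_embedding hemb hmem
  have hEw : ∀ w : V, ({e : G.edgeSet | w ∈ (e : Sym2 V)}).ncard = G.degree w := by
    intro w
    have himg : Subtype.val '' {e : G.edgeSet | w ∈ (e : Sym2 V)} = G.incidenceSet w := by
      ext q
      constructor
      · rintro ⟨e, he, rfl⟩
        exact ⟨e.property, he⟩
      · rintro ⟨hq, hw⟩
        exact ⟨⟨q, hq⟩, hw, rfl⟩
    have himc := Set.ncard_image_of_injective
      {e : G.edgeSet | w ∈ (e : Sym2 V)} (Subtype.val_injective)
    rw [himg] at himc
    rw [← himc, ← Nat.card_coe_set_eq, Nat.card_eq_fintype_card]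
    convert G.card_incidenceSet_eq_degree w
  have hdeg : (G.lineGraph.neighborSet e0).ncard < k := by
    set Eu := {e : G.edgeSet | u ∈ (e : Sym2 V)} with hEu
    set Ev := {e : G.edgeSet | v ∈ (e : Sym2 V)} with hEv
    have hsub : G.lineGraph.neighborSet e0 ⊆ (Eu \ {e0}) ∪ (Ev \ {e0}) := by
      intro e he
      have hadj : G.lineGraph.Adj e0 e := he
      rw [lineGraph_adj_iff_exists] at hadj
      obtain ⟨hne, x, hx0, hxe⟩ := hadj
      have hxuv : x = u ∨ x = v := by
        have hxm : x ∈ (s(u, v) : Sym2 V) := hx0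
        simpa [Sym2.mem_iff] using hxm
      have hnee : e ≠ e0 := fun h => hne h.symm
      rcases hxuv with rfl | rfl
      · exact Or.inl ⟨hxe, fun h => hnee h⟩
      · exact Or.inr ⟨hxe, fun h => hnee h⟩
    have hcard1 : (G.lineGraph.neighborSet e0).ncard ≤
        (Eu \ {e0}).ncard + (Ev \ {e0}).ncard :=
      le_trans (Set.ncard_le_ncard hsub (Set.toFinite _)) (Set.ncard_union_le _ _)
    have he0u : e0 ∈ Eu := Sym2.mem_mk_left u v
    have he0v : e0 ∈ Ev := Sym2.mem_mk_right u v
    have hEu' : (Eu \ {e0}).ncard = G.degree u - 1 := by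
      rw [Set.ncard_diff_singleton_of_mem he0u, hEw u]
    have hEv' : (Ev \ {e0}).ncard = G.degree v - 1 := by
      rw [Set.ncard_diff_singleton_of_mem he0v, hEw v]
    have hdu : 0 < G.degree u := (G.degree_pos_iff_exists_adj u).2 ⟨v, huv⟩
    have hdv : 0 < G.degree v := (G.degree_pos_iff_exists_adj v).2 ⟨u, huv.symm⟩
    have hDu : G.degree u ≤ G.maxDegree := G.degree_le_maxDegree u
    omega
  have h2 : IsGroupChoosable G.lineGraph k := groupChoosable_extend e0 hdeg h1
  have h3 : groupEdgeChoiceNumber G ≤ k := Nat.sInf_le h2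
  have h4 := hG.1
  omega
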